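/- Let f : ℝⁿ × ℝᵐ → ℝ be twice continuously differentiable, let A ∈ ℝ^{p×m} have rank p, and let d ∈ ℝᵖ. Suppose y : ℝⁿ → ℝᵐ is differentiable at x₀, satisfies the linear equality constraint A y(x) = d for all x in a neighborhood of x₀, and satisfies the stationarity condition that for every x in that neighborhood the gradient ∇_Y f(x, y(x)) lies in the range of Aᵀ (i.e., there exists λ(x) ∈ ℝᵖ with ∇_Y f(x, y(x)) = Aᵀ λ(x), the Lagrangian first-order condition for y(x) ∈ argmin_{u : Au = d} f(x, u)). Set H = ∇²_{YY} f(x₀, y(x₀)) and B = ∇²_{XY} f(x₀, y(x₀)). If H is symmetric positive definite, then Dy(x₀) = (H⁻¹ Aᵀ (A H⁻¹ Aᵀ)⁻¹ A H⁻¹ − H⁻¹) B. -/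

import Mathlib

open Matrix

set_option maxHeartbeats 1000000 in
/-- **Lemma 2 (equality-constrained declarative layer derivative).**
Let `f : ℝⁿ × ℝᵐ → ℝ` be twice continuously differentiable, `A ∈ ℝ^{p×m}` with rank `p`,
and `d ∈ ℝᵖ`. Suppose `y : ℝⁿ → ℝᵐ` is differentiable at `x₀`, satisfies `A (y x) = d`
for all `x` near `x₀`, and satisfies the Lagrangian first-order condition
`∇_Y f (x, y x) = Aᵀ λ(x)` for some `λ(x)`, for all `x` near `x₀`. Set
`H = ∇²_{YY} f (x₀, y x₀)` and `B = ∇²_{XY} f (x₀, y x₀)`. If `H` is symmetric positive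
definite then `Dy(x₀) = (H⁻¹ Aᵀ (A H⁻¹ Aᵀ)⁻¹ A H⁻¹ - H⁻¹) B`. -/
theorem constrained_declarative_derivative
    {n m p : ℕ}
    (f : (Fin n → ℝ) × (Fin m → ℝ) → ℝ)
    (hf : ContDiff ℝ 2 f)
    (A : Matrix (Fin p) (Fin m) ℝ)
    (hA : A.rank = p)
    (d : Fin p → ℝ)
    (y : (Fin n → ℝ) → (Fin m → ℝ))
    (x₀ : Fin n → ℝ)
    (hy : DifferentiableAt ℝ y x₀)
    -- `g x u` is the gradient of `f` with respect to its second argument: `∇_Y f (x, u)`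
    (g : (Fin n → ℝ) → (Fin m → ℝ) → (Fin m → ℝ))
    (hg : ∀ x u i, g x u i = fderiv ℝ (fun v => f (x, v)) u (Pi.single i 1))
    -- the linear equality constraint holds in a neighborhood of `x₀`
    (hconstraint : ∀ᶠ x in nhds x₀, A.mulVec (y x) = d)
    -- Lagrangian first-order stationarity: `∇_Y f (x, y x) ∈ range Aᵀ` near `x₀`
    (hstat : ∀ᶠ x in nhds x₀, ∃ lam : Fin p → ℝ, g x (y x) = Matrix.mulVec Aᵀ lam)
    -- `H = ∇²_{YY} f (x₀, y x₀)`
    (H : Matrix (Fin m) (Fin m) ℝ)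
    (hH : ∀ i j, H i j = fderiv ℝ (fun v => g x₀ v i) (y x₀) (Pi.single j 1))
    -- `B = ∇²_{XY} f (x₀, y x₀)`
    (B : Matrix (Fin m) (Fin n) ℝ)
    (hB : ∀ i j, B i j = fderiv ℝ (fun x => g x (y x₀) i) x₀ (Pi.single j 1))
    (hHpd : H.PosDef) :
    ∀ i j, fderiv ℝ y x₀ (Pi.single j 1) i
      = ((H⁻¹ * Aᵀ * (A * H⁻¹ * Aᵀ)⁻¹ * A * H⁻¹ - H⁻¹) * B) i j := by
  classical
  have hf1 : Differentiable ℝ f := hf.differentiable (by norm_num)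
  set G : ((Fin n → ℝ) × (Fin m → ℝ)) → (((Fin n → ℝ) × (Fin m → ℝ)) →L[ℝ] ℝ) :=
    fderiv ℝ f with hGdef
  have hGc : ContDiff ℝ 1 G := hf.fderiv_right (by norm_num)
  -- the partial derivative of `f` in its second variable
  have hpart : ∀ (x : Fin n → ℝ) (u : Fin m → ℝ), fderiv ℝ (fun v => f (x, v)) u
      = (G (x, u)).comp (ContinuousLinearMap.inr ℝ (Fin n → ℝ) (Fin m → ℝ)) := by
    intro x u
    exact (((hf1 (x, u)).hasFDerivAt).comp u (hasFDerivAt_prodMk_right x u)).fderiv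
  have hg' : ∀ x u i, g x u i = G (x, u) (0, Pi.single i 1) := by
    intro x u i
    rw [hg, hpart]
    simp
  have hderivG : HasFDerivAt G (fderiv ℝ G (x₀, y x₀)) (x₀, y x₀) :=
    (hGc.differentiable (by norm_num) (x₀, y x₀)).hasFDerivAt
  set D2 := fderiv ℝ G (x₀, y x₀) with hD2
  set D := fderiv ℝ y x₀ with hD
  -- H in terms of D2
  have hHeq : ∀ i j, H i j = D2 (0, Pi.single j 1) (0, Pi.single i 1) := by
    intro i j
    have h2 : HasFDerivAt (fun v => G (x₀, v))
        (D2.comp (ContinuousLinearMap.inr ℝ (Fin n → ℝ) (Fin m → ℝ))) (y x₀) :=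
      hderivG.comp (y x₀) (hasFDerivAt_prodMk_right x₀ (y x₀))
    have h0 := (ContinuousLinearMap.apply ℝ ℝ
        (((0 : Fin n → ℝ), Pi.single i 1))).hasFDerivAt.comp (y x₀) h2
    have h1 : HasFDerivAt (fun v => G (x₀, v) ((0 : Fin n → ℝ), Pi.single i 1))
        ((ContinuousLinearMap.apply ℝ ℝ (((0 : Fin n → ℝ), Pi.single i 1))).comp
          (D2.comp (ContinuousLinearMap.inr ℝ (Fin n → ℝ) (Fin m → ℝ)))) (y x₀) := h0
    have h3 : (fun v => g x₀ v i) = fun v => G (x₀, v) ((0 : Fin n → ℝ), Pi.single i 1) :=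
      funext fun v => hg' x₀ v i
    rw [hH, h3, h1.fderiv]
    simp
  -- B in terms of D2
  have hBeq : ∀ i j, B i j = D2 (Pi.single j 1, 0) (0, Pi.single i 1) := by
    intro i j
    have h2 : HasFDerivAt (fun x => G (x, y x₀))
        (D2.comp (ContinuousLinearMap.inl ℝ (Fin n → ℝ) (Fin m → ℝ))) x₀ :=
      hderivG.comp x₀ (hasFDerivAt_prodMk_left x₀ (y x₀))
    have h0 := (ContinuousLinearMap.apply ℝ ℝ
        (((0 : Fin n → ℝ), Pi.single i 1))).hasFDerivAt.comp x₀ h2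
    have h1 : HasFDerivAt (fun x => G (x, y x₀) ((0 : Fin n → ℝ), Pi.single i 1))
        ((ContinuousLinearMap.apply ℝ ℝ (((0 : Fin n → ℝ), Pi.single i 1))).comp
          (D2.comp (ContinuousLinearMap.inl ℝ (Fin n → ℝ) (Fin m → ℝ)))) x₀ := h0
    have h3 : (fun x => g x (y x₀) i) = fun x => G (x, y x₀) ((0 : Fin n → ℝ), Pi.single i 1) :=
      funext fun x => hg' x (y x₀) i
    rw [hB, h3, h1.fderiv]
    simp
  -- derivative of x ↦ g x (y x)
  have hxy : HasFDerivAt (fun x => (x, y x))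
      ((ContinuousLinearMap.id ℝ (Fin n → ℝ)).prod D) x₀ :=
    (hasFDerivAt_id x₀).prodMk hy.hasFDerivAt
  set Φ' : (Fin n → ℝ) →L[ℝ] (Fin m → ℝ) := ContinuousLinearMap.pi (fun i =>
    (ContinuousLinearMap.apply ℝ ℝ (((0 : Fin n → ℝ), Pi.single i 1))).comp
      (D2.comp ((ContinuousLinearMap.id ℝ (Fin n → ℝ)).prod D))) with hΦ'def
  have hΦ : HasFDerivAt (fun x => g x (y x)) Φ' x₀ := by
    have key : ∀ i, HasFDerivAt (fun x => g x (y x) i)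
        ((ContinuousLinearMap.apply ℝ ℝ (((0 : Fin n → ℝ), Pi.single i 1))).comp
          (D2.comp ((ContinuousLinearMap.id ℝ (Fin n → ℝ)).prod D))) x₀ := by
      intro i
      have h2 : HasFDerivAt (fun x => G (x, y x))
          (D2.comp ((ContinuousLinearMap.id ℝ (Fin n → ℝ)).prod D)) x₀ :=
        hderivG.comp x₀ hxy
      have h1 := (ContinuousLinearMap.apply ℝ ℝ
          (((0 : Fin n → ℝ), Pi.single i 1))).hasFDerivAt.comp x₀ h2
      have h3 : (fun x => g x (y x) i)
          = fun x => G (x, y x) ((0 : Fin n → ℝ), Pi.single i 1) :=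
        funext fun x => hg' x (y x) i
      rw [h3]
      exact h1
    exact hasFDerivAt_pi.mpr key
  -- the constraint derivative : A *ᵥ D v = 0
  have hAD : ∀ v, A.mulVec (D v) = 0 := by
    intro v
    set L : (Fin m → ℝ) →L[ℝ] (Fin p → ℝ) :=
      LinearMap.toContinuousLinearMap (Matrix.mulVecLin A) with hL
    have h1 : HasFDerivAt (fun x => A.mulVec (y x)) (L.comp D) x₀ :=
      L.hasFDerivAt.comp x₀ hy.hasFDerivAt
    have h2 : fderiv ℝ (fun x => A.mulVec (y x)) x₀ = 0 := by
      have heq : (fun x => A.mulVec (y x)) =ᶠ[nhds x₀] fun _ => d := hconstraint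
      rw [heq.fderiv_eq]
      exact fderiv_const_apply d
    have h3 : L.comp D = 0 := by rw [← h1.fderiv, h2]
    have h4 := congrArg (fun (T : (Fin n → ℝ) →L[ℝ] (Fin p → ℝ)) => T v) h3
    simpa [hL] using h4
  -- the subspace S = range Aᵀ
  set S : Submodule ℝ (Fin m → ℝ) := LinearMap.range (Matrix.mulVecLin Aᵀ) with hSdef
  have hS_closed : IsClosed (S : Set (Fin m → ℝ)) := S.closed_of_finiteDimensional
  have hgS : ∀ᶠ x in nhds x₀, g x (y x) ∈ S := by
    filter_upwards [hstat] with x hx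
    obtain ⟨lam, hlam⟩ := hx
    exact ⟨lam, hlam.symm⟩
  have hmemS : ∀ v, Φ' v ∈ S := by
    intro v
    have hlim := hΦ.lim_real v
    refine hS_closed.mem_of_tendsto hlim ?_
    have htends : Filter.Tendsto (fun c : ℝ => x₀ + c⁻¹ • v) Filter.atTop (nhds x₀) := by
      have h0 : Filter.Tendsto (fun c : ℝ => c⁻¹ • v) Filter.atTop (nhds ((0:ℝ) • v)) :=
        tendsto_inv_atTop_zero.smul_const v
      have h1 := h0.const_add x₀
      simpa using h1
    have h0 : g x₀ (y x₀) ∈ S := hgS.self_of_nhds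
    filter_upwards [htends.eventually hgS] with c hc
    exact S.smul_mem _ (S.sub_mem hc h0)
  -- compute Φ' (e_j)
  have hΦval : ∀ j, Φ' (Pi.single j 1)
      = B.mulVec (Pi.single j 1) + H.mulVec (D (Pi.single j 1)) := by
    intro j
    funext i
    have h1 : Φ' (Pi.single j 1) i
        = D2 (Pi.single j 1, D (Pi.single j 1)) ((0 : Fin n → ℝ), Pi.single i 1) := by
      simp [hΦ'def]
    have hsplit : ((Pi.single j 1 : Fin n → ℝ), D (Pi.single j 1))
        = ((Pi.single j 1 : Fin n → ℝ), (0 : Fin m → ℝ))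
          + ((0 : Fin n → ℝ), D (Pi.single j 1)) := by
      simp [Prod.ext_iff]
    have hsum : (((0 : Fin n → ℝ), D (Pi.single j 1)) : (Fin n → ℝ) × (Fin m → ℝ))
        = ∑ k, D (Pi.single j 1) k • (((0 : Fin n → ℝ), (Pi.single k 1 : Fin m → ℝ))) := by
      rw [Prod.ext_iff]
      constructor
      · simp [Prod.fst_sum]
      · simp only [Prod.snd_sum, Prod.smul_snd]
        funext l
        simp [Pi.single_apply, Finset.sum_ite_eq']
    rw [h1, hsplit, map_add, ContinuousLinearMap.add_apply, hsum, map_sum,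
      ContinuousLinearMap.sum_apply]
    simp only [_root_.map_smul, ContinuousLinearMap.smul_apply]
    have hB' : D2 ((Pi.single j 1 : Fin n → ℝ), (0 : Fin m → ℝ))
        ((0 : Fin n → ℝ), Pi.single i 1) = B i j := (hBeq i j).symm
    have hH' : ∀ k, D2 ((0 : Fin n → ℝ), (Pi.single k 1 : Fin m → ℝ))
        ((0 : Fin n → ℝ), Pi.single i 1) = H i k := fun k => (hHeq i k).symm
    rw [hB']
    simp only [hH']
    rw [Pi.add_apply]
    congr 1
    · simp
    · show _ = dotProduct (H i) (D (Pi.single j 1))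
      rw [dotProduct]
      exact Finset.sum_congr rfl fun k _ => by rw [smul_eq_mul, mul_comm]
  -- invertibility facts
  have hHunit : IsUnit H := hHpd.isUnit
  have hHdet : IsUnit H.det := (Matrix.isUnit_iff_isUnit_det H).mp hHunit
  have hHiH : H⁻¹ * H = 1 := Matrix.nonsing_inv_mul H hHdet
  have hHipd : (H⁻¹).PosDef := hHpd.inv
  -- injectivity of Aᵀ *ᵥ ·
  have hAT_inj : ∀ z : Fin p → ℝ, Aᵀ.mulVec z = 0 → z = 0 := by
    have hrk : Aᵀ.rank = p := by rw [Matrix.rank_transpose]; exact hA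
    have h1 : Module.finrank ℝ (LinearMap.range Aᵀ.mulVecLin)
        + Module.finrank ℝ (LinearMap.ker Aᵀ.mulVecLin) = p := by
      have h := LinearMap.finrank_range_add_finrank_ker Aᵀ.mulVecLin
      simpa using h
    have hr : Module.finrank ℝ (LinearMap.range Aᵀ.mulVecLin) = p := hrk
    have h2 : Module.finrank ℝ (LinearMap.ker Aᵀ.mulVecLin) = 0 := by omega
    have h3 : LinearMap.ker Aᵀ.mulVecLin = ⊥ := Submodule.finrank_eq_zero.mp h2
    intro z hz
    have hz' : z ∈ LinearMap.ker Aᵀ.mulVecLin := by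
      simpa [Matrix.mulVecLin_apply, Matrix.mulVec_transpose] using hz
    rw [h3] at hz'
    simpa using hz'
  -- K = A H⁻¹ Aᵀ is invertible
  set K : Matrix (Fin p) (Fin p) ℝ := A * H⁻¹ * Aᵀ with hKdef
  have hKker : ∀ z : Fin p → ℝ, K.mulVec z = 0 → z = 0 := by
    intro z hz
    by_contra hzne
    have hAz : Aᵀ.mulVec z ≠ 0 := fun h => hzne (hAT_inj z h)
    have hpos := hHipd.dotProduct_mulVec_pos hAz
    have hcomp : dotProduct (star z) (K.mulVec z)
        = dotProduct (star (Aᵀ.mulVec z)) (H⁻¹.mulVec (Aᵀ.mulVec z)) := by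
      rw [hKdef, ← Matrix.mulVec_mulVec, ← Matrix.mulVec_mulVec,
        Matrix.dotProduct_mulVec]
      have : star z ᵥ* A = Aᵀ.mulVec (star z) := (Matrix.mulVec_transpose A (star z)).symm
      rw [this]
      congr 1
    rw [hz] at hcomp
    simp only [Matrix.mulVec_zero, dotProduct_zero] at hcomp
    rw [← hcomp] at hpos
    exact lt_irrefl 0 hpos
  have hKunit : IsUnit K := by
    rw [← Matrix.mulVec_injective_iff_isUnit]
    intro z w hzw
    have h0 : K.mulVec (z - w) = 0 := by
      rw [Matrix.mulVec_sub, hzw, sub_self]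
    have := hKker _ h0
    exact sub_eq_zero.mp this
  have hKdet : IsUnit K.det := (Matrix.isUnit_iff_isUnit_det K).mp hKunit
  have hKiK : K⁻¹ * K = 1 := Matrix.nonsing_inv_mul K hKdet
  -- the final computation
  intro i j
  set b : Fin m → ℝ := B.mulVec (Pi.single j 1) with hb
  set u : Fin m → ℝ := D (Pi.single j 1) with hu
  obtain ⟨μ, hμ⟩ := hmemS (Pi.single j 1)
  have hμ' : Aᵀ.mulVec μ = b + H.mulVec u := by
    rw [hb, hu, ← hΦval j, ← hμ, Matrix.mulVecLin_apply]
  have hAu : A.mulVec u = 0 := hAD _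
  -- u = (H⁻¹ Aᵀ) μ - H⁻¹ b
  have e1 : u = (H⁻¹ * Aᵀ).mulVec μ - H⁻¹.mulVec b := by
    have h := congrArg (fun w => H⁻¹.mulVec w) hμ'
    simp only [Matrix.mulVec_add, Matrix.mulVec_mulVec, hHiH, Matrix.one_mulVec] at h
    rw [← Matrix.mulVec_mulVec] at *
    exact (sub_eq_of_eq_add' h).symm
  -- K μ = (A H⁻¹) b
  have e2 : K.mulVec μ = (A * H⁻¹).mulVec b := by
    have h := congrArg (fun w => A.mulVec w) e1
    simp only [Matrix.mulVec_sub, Matrix.mulVec_mulVec, hAu] at h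
    have h2 : (A * (H⁻¹ * Aᵀ)).mulVec μ = (A * H⁻¹).mulVec b := by
      rw [eq_comm, sub_eq_zero] at h
      exact h
    rw [hKdef, Matrix.mul_assoc]
    exact h2
  have e3 : μ = (K⁻¹ * (A * H⁻¹)).mulVec b := by
    have h := congrArg (fun w => K⁻¹.mulVec w) e2
    simpa [Matrix.mulVec_mulVec, hKiK, Matrix.one_mulVec] using h
  have e4 : u = ((H⁻¹ * Aᵀ * K⁻¹ * A * H⁻¹ - H⁻¹) * B).mulVec (Pi.single j 1) := by
    rw [e1, e3, Matrix.mulVec_mulVec, ← Matrix.sub_mulVec, hb, Matrix.mulVec_mulVec]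
    simp only [Matrix.mul_assoc]
  have e5 := congrFun e4 i
  rw [e5]
  simp [Matrix.mulVec_single]
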